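/- arXiv:1508.00209 — 2 statements merged into one kernel-verified Lean document; each statement's English description precedes it below -/
import Mathlib

section
/- Let k be a field and let a ≥ r ≥ 1. There exists a linear subspace M of the a × a matrices over k of dimension a - r + 1 such that every nonzero element of M has rank exactly r. In particular l(r;a) ≥ a - r + 1. -/
open Matrix

/-- The shifted-rows matrix: row `i` (for `i < r`) is the vector `c` shifted by `i`. -/
def cmat {k : Type*} [Field k] (a r : ℕ) (c : Fin (a - r + 1) → k) :
    Matrix (Fin a) (Fin a) k :=
  Matrix.of fun i j =>
    if h : (i : ℕ) < r ∧ (i : ℕ) ≤ (j : ℕ) ∧ (j : ℕ) - (i : ℕ) < a - r + 1 then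
      c ⟨(j : ℕ) - (i : ℕ), h.2.2⟩ else 0

/-- `cmat` as a linear map. -/
def cmatL (k : Type*) [Field k] (a r : ℕ) :
    (Fin (a - r + 1) → k) →ₗ[k] Matrix (Fin a) (Fin a) k where
  toFun := cmat a r
  map_add' c d := by
    ext i j
    simp only [cmat, Matrix.of_apply, Matrix.add_apply]
    split <;> simp
  map_smul' t c := by
    ext i j
    simp only [cmat, Matrix.of_apply, Matrix.smul_apply, RingHom.id_apply]
    split <;> simp

lemma cmat_rank_le {k : Type*} [Field k] {a r : ℕ} (hra : r ≤ a)
    (c : Fin (a - r + 1) → k) : (cmat a r c).rank ≤ r := by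
  set A := cmat a r c with hA
  set P : Matrix (Fin a) (Fin r) k := fun i t => if (i : ℕ) = (t : ℕ) then 1 else 0 with hP
  set Q : Matrix (Fin r) (Fin a) k :=
    fun t j => A ⟨t, lt_of_lt_of_le t.2 hra⟩ j with hQ
  have hPQ : A = P * Q := by
    ext i j
    rw [Matrix.mul_apply]
    by_cases hi : (i : ℕ) < r
    · rw [Finset.sum_eq_single (⟨(i : ℕ), hi⟩ : Fin r)]
      · simp [hP, hQ]
      · intro b _ hb
        have : (i : ℕ) ≠ (b : ℕ) := by
          intro h; apply hb; exact Fin.ext h.symm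
        simp [hP, this]
      · intro h; exact absurd (Finset.mem_univ _) h
    · have h1 : A i j = 0 := by
        simp only [hA, cmat, Matrix.of_apply]
        rw [dif_neg]; intro h; exact hi h.1
      have h2 : ∀ t : Fin r, P i t * Q t j = 0 := by
        intro t
        have : (i : ℕ) ≠ (t : ℕ) := by
          intro h; exact hi (h ▸ t.2)
        simp [hP, this]
      rw [h1, Finset.sum_congr rfl fun t _ => h2 t, Finset.sum_const_zero]
  calc A.rank = (P * Q).rank := by rw [hPQ]
    _ ≤ Q.rank := Matrix.rank_mul_le_right P Q
    _ ≤ Fintype.card (Fin r) := Q.rank_le_card_height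
    _ = r := Fintype.card_fin r

lemma cmat_rank_ge {k : Type*} [Field k] {a r : ℕ} (hr : 1 ≤ r) (hra : r ≤ a)
    {c : Fin (a - r + 1) → k} (hc : c ≠ 0) : (r : ℕ) ≤ (cmat a r c).rank := by
  classical
  set A := cmat a r c with hA
  -- minimal index where c is nonzero
  have hex : (Finset.univ.filter fun x => c x ≠ 0).Nonempty := by
    by_contra h
    apply hc
    funext x
    by_contra hx
    exact h ⟨x, Finset.mem_filter.2 ⟨Finset.mem_univ x, hx⟩⟩
  set s := Finset.univ.filter fun x => c x ≠ 0 with hs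
  set m : Fin (a - r + 1) := s.min' hex with hm
  have hcm : c m ≠ 0 := (Finset.mem_filter.1 (s.min'_mem hex)).2
  have hmin : ∀ x : Fin (a - r + 1), x < m → c x = 0 := by
    intro x hx
    by_contra hcx
    exact absurd (s.min'_le x (Finset.mem_filter.2 ⟨Finset.mem_univ x, hcx⟩)) (not_le.2 hx)
  have hmle : (m : ℕ) ≤ a - r := Nat.lt_succ_iff.mp m.2
  -- row and column index maps
  set fr : Fin r → Fin a := fun i => ⟨i, lt_of_lt_of_le i.2 hra⟩ with hfr
  set g : Fin r → Fin a := fun j => ⟨(m : ℕ) + j, by omega⟩ with hg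
  -- the r×r submatrix
  set S : Matrix (Fin r) (Fin r) k := fun i j => A (fr i) (g j) with hS
  have hStri : S.BlockTriangular id := by
    intro i j hij
    simp only [id] at hij
    simp only [hS, hA, cmat, Matrix.of_apply, hfr, hg]
    split
    · rename_i h
      apply hmin
      show ((m : ℕ) + (j : ℕ) - (i : ℕ)) < (m : ℕ)
      have := h.2.1
      omega
    · rfl
  have hSdiag : ∀ i : Fin r, S i i = c m := by
    intro i
    simp only [hS, hA, cmat, Matrix.of_apply, hfr, hg]
    rw [dif_pos (by refine ⟨i.2, ?_, ?_⟩ <;> simp [hmle])]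
    congr 1
    apply Fin.ext
    simp
  have hdet : S.det ≠ 0 := by
    rw [Matrix.det_of_upperTriangular hStri]
    simp only [hSdiag]
    rw [Finset.prod_const]
    exact pow_ne_zero _ hcm
  have hSunit : IsUnit S := by
    rw [Matrix.isUnit_iff_isUnit_det]
    exact hdet.isUnit
  -- columns of A indexed by g
  set v : Fin r → (Fin a → k) := fun j => Aᵀ (g j) with hv
  have hli : LinearIndependent k v := by
    have hS' : LinearIndependent k (fun j => Sᵀ j) :=
      Matrix.linearIndependent_cols_iff_isUnit.2 hSunit
    have hπ : (LinearMap.funLeft k k fr) ∘ v = fun j => Sᵀ j := by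
      funext j
      rfl
    exact LinearIndependent.of_comp (LinearMap.funLeft k k fr) (hπ ▸ hS')
  have hsub : Submodule.span k (Set.range v) ≤ Submodule.span k (Set.range Aᵀ) := by
    apply Submodule.span_mono
    rintro _ ⟨j, rfl⟩
    exact ⟨g j, rfl⟩
  have h1 : Module.finrank k (Submodule.span k (Set.range v)) = r := by
    rw [finrank_span_eq_card hli, Fintype.card_fin]
  rw [Matrix.rank_eq_finrank_span_cols, ← h1]
  exact Submodule.finrank_mono hsub

/-- For a ≥ r ≥ 1 there exists a subspace of a×a matrices of dimension a-r+1
in which every nonzero element has rank exactly r; hence l(r;a) ≥ a-r+1. -/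
theorem exists_constant_rank_subspace (k : Type*) [Field k] (a r : ℕ)
    (hr : 1 ≤ r) (hra : r ≤ a) :
    ∃ M : Submodule k (Matrix (Fin a) (Fin a) k),
      Module.finrank k M = a - r + 1 ∧
      ∀ f ∈ M, f ≠ 0 → f.rank = r := by
  refine ⟨LinearMap.range (cmatL k a r), ?_, ?_⟩
  · have hinj : Function.Injective (cmatL k a r) := by
      rw [← LinearMap.ker_eq_bot]
      rw [LinearMap.ker_eq_bot']
      intro c hcz
      funext x
      have hx := congrFun (congrFun hcz ⟨0, by omega⟩) ⟨(x : ℕ), by omega⟩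
      simp only [cmatL, LinearMap.coe_mk, AddHom.coe_mk, cmat, Matrix.of_apply,
        Matrix.zero_apply] at hx
      rw [dif_pos ⟨hr, Nat.zero_le _, by simpa using x.2⟩] at hx
      simpa using hx
    rw [LinearMap.finrank_range_of_inj hinj]
    simp
  · rintro f ⟨c, rfl⟩ hf
    have hc : c ≠ 0 := by
      rintro rfl
      exact hf (map_zero _)
    exact le_antisymm (cmat_rank_le hra c) (cmat_rank_ge hr hra hc)
end

section
/- For every nonzero (x0, x1, x2) in k³ (k a field of characteristic zero), the 5×5 matrix Ψ with rows (0, -x2, 0, -x0, 0), (x2, 0, 0, -x1, -x0), (0, 0, 0, -x2, -x1), (x0, x1, x2, 0, 0), (0, x0, x1, 0, 0) has rank exactly 4. -/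
open Matrix

private lemma rank_sub_le {k : Type*} [Field k] (M : Matrix (Fin 5) (Fin 5) k)
    (f g : Fin 4 → Fin 5) : (M.submatrix f g).rank ≤ M.rank := by
  have h1 : ((1 : Matrix (Fin 5) (Fin 5) k).submatrix f (Equiv.refl (Fin 5))) * M
      = M.submatrix f id := by
    rw [one_submatrix_mul]
    rfl
  have h2 : (M.submatrix f id) * ((1 : Matrix (Fin 5) (Fin 5) k).submatrix (Equiv.refl (Fin 5)) g)
      = M.submatrix f g := by
    rw [mul_submatrix_one]
    simp [submatrix_submatrix]
  calc (M.submatrix f g).rank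
      = (((1 : Matrix (Fin 5) (Fin 5) k).submatrix f (Equiv.refl (Fin 5))) * M
          * ((1 : Matrix (Fin 5) (Fin 5) k).submatrix (Equiv.refl (Fin 5)) g)).rank := by
        rw [h1, h2]
    _ ≤ (((1 : Matrix (Fin 5) (Fin 5) k).submatrix f (Equiv.refl (Fin 5))) * M).rank :=
        rank_mul_le_left _ _
    _ ≤ M.rank := rank_mul_le_right _ _

private lemma rank_le_four_of_det_eq_zero {k : Type*} [Field k] (M : Matrix (Fin 5) (Fin 5) k)
    (h : M.det = 0) : M.rank ≤ 4 := by
  obtain ⟨v, hv, hMv⟩ := (Matrix.exists_mulVec_eq_zero_iff).mpr h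
  have hker : v ∈ LinearMap.ker M.mulVecLin := by
    simpa [Matrix.mulVecLin_apply] using hMv
  have hk : 0 < Module.finrank k (LinearMap.ker M.mulVecLin) :=
    Module.finrank_pos_iff_exists_ne_zero.mpr ⟨⟨v, hker⟩, by simpa using hv⟩
  have hrn := LinearMap.finrank_range_add_finrank_ker M.mulVecLin
  have hdom : Module.finrank k (Fin 5 → k) = 5 := by simp
  rw [hdom] at hrn
  have : M.rank + Module.finrank k (LinearMap.ker M.mulVecLin) = 5 := hrn
  omega

private lemma rank_ge_of_det_ne_zero {k : Type*} [Field k] (M : Matrix (Fin 5) (Fin 5) k)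
    (f g : Fin 4 → Fin 5) (h : (M.submatrix f g).det ≠ 0) : 4 ≤ M.rank := by
  have h1 : (M.submatrix f g).rank = 4 := by
    have := Matrix.rank_of_isUnit (M.submatrix f g)
      ((Matrix.isUnit_iff_isUnit_det _).mpr h.isUnit)
    simpa using this
  calc 4 = (M.submatrix f g).rank := h1.symm
    _ ≤ M.rank := rank_sub_le M f g

set_option maxHeartbeats 1000000 in
/-- Sylvester's 5×5 matrix has rank exactly 4 for every nonzero (x0,x1,x2). -/
theorem sylvester_matrix_rank_four (k : Type*) [Field k] [CharZero k]
    (x0 x1 x2 : k) (hx : ¬(x0 = 0 ∧ x1 = 0 ∧ x2 = 0)) :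
    (Matrix.of ![![0, -x2, 0, -x0, 0],
                 ![x2, 0, 0, -x1, -x0],
                 ![0, 0, 0, -x2, -x1],
                 ![x0, x1, x2, 0, 0],
                 ![0, x0, x1, 0, 0]] : Matrix (Fin 5) (Fin 5) k).rank = 4 := by
  set M : Matrix (Fin 5) (Fin 5) k :=
    Matrix.of ![![0, -x2, 0, -x0, 0],
                 ![x2, 0, 0, -x1, -x0],
                 ![0, 0, 0, -x2, -x1],
                 ![x0, x1, x2, 0, 0],
                 ![0, x0, x1, 0, 0]] with hM
  have hdet : M.det = 0 := by
    simp [hM, Matrix.det_succ_row_zero, Fin.sum_univ_succ, Fin.succAbove,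
          show ((2:Fin 3).castSucc = 2) from rfl, show ((2:Fin 4).castSucc = 2) from rfl,
          show ((3:Fin 4).castSucc = 3) from rfl]
    ring
  have hle : M.rank ≤ 4 := rank_le_four_of_det_eq_zero M hdet
  have hge : 4 ≤ M.rank := by
    by_cases h0 : x0 ≠ 0
    · apply rank_ge_of_det_ne_zero M ![0, 1, 3, 4] ![0, 1, 3, 4]
      have : (M.submatrix ![0, 1, 3, 4] ![0, 1, 3, 4]).det = x0 ^ 4 := by
        rw [show M.submatrix ![0, 1, 3, 4] ![0, 1, 3, 4] = Matrix.of ![![0, -x2, -x0, 0], ![x2, 0, -x1, -x0], ![x0, x1, 0, 0], ![0, x0, 0, 0]] by rw [hM]; ext i j; fin_cases i <;> fin_cases j <;> rfl]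
        simp [hM, Matrix.det_succ_row_zero, Fin.sum_univ_succ, Fin.succAbove,
          show ((2:Fin 3).castSucc = 2) from rfl, show ((2:Fin 4).castSucc = 2) from rfl,
          show ((3:Fin 4).castSucc = 3) from rfl]
        ring
      rw [this]
      exact pow_ne_zero _ h0
    · push_neg at h0
      by_cases h2 : x2 ≠ 0
      · apply rank_ge_of_det_ne_zero M ![0, 1, 2, 3] ![0, 1, 2, 3]
        have : (M.submatrix ![0, 1, 2, 3] ![0, 1, 2, 3]).det = x2 ^ 4 := by
          rw [show M.submatrix ![0, 1, 2, 3] ![0, 1, 2, 3] = Matrix.of ![![0, -x2, 0, -x0], ![x2, 0, 0, -x1], ![0, 0, 0, -x2], ![x0, x1, x2, 0]] by rw [hM]; ext i j; fin_cases i <;> fin_cases j <;> rfl]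
          simp [hM, Matrix.det_succ_row_zero, Fin.sum_univ_succ, Fin.succAbove,
          show ((2:Fin 3).castSucc = 2) from rfl, show ((2:Fin 4).castSucc = 2) from rfl,
          show ((3:Fin 4).castSucc = 3) from rfl]
          ring
        rw [this]
        exact pow_ne_zero _ h2
      · push_neg at h2
        have h1 : x1 ≠ 0 := by
          intro h1; exact hx ⟨h0, h1, h2⟩
        apply rank_ge_of_det_ne_zero M ![1, 2, 3, 4] ![1, 2, 3, 4]
        have : (M.submatrix ![1, 2, 3, 4] ![1, 2, 3, 4]).det = (x0 * x2 - x1 ^ 2) ^ 2 := by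
          rw [show M.submatrix ![1, 2, 3, 4] ![1, 2, 3, 4] = Matrix.of ![![0, 0, -x1, -x0], ![0, 0, -x2, -x1], ![x1, x2, 0, 0], ![x0, x1, 0, 0]] by rw [hM]; ext i j; fin_cases i <;> fin_cases j <;> rfl]
          simp [hM, Matrix.det_succ_row_zero, Fin.sum_univ_succ, Fin.succAbove,
          show ((2:Fin 3).castSucc = 2) from rfl, show ((2:Fin 4).castSucc = 2) from rfl,
          show ((3:Fin 4).castSucc = 3) from rfl]
          ring
        rw [this, h0, h2]
        simpa using pow_ne_zero 2 (by simpa using h1 : -x1^2 ≠ 0)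
  omega
end
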